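/- Let c ∈ ℂ and let ψ = σ·e^{-σ}·(1+cσ)^{-1}, a formal power series in σ over ℂ of order 1 (here e^{-σ} = Σ_{m≥0} (-σ)^m/m! and (1+cσ)^{-1} is the formal inverse of 1+cσ). Then in the ring of formal power series in σ with coefficients in the polynomial ring ℂ[x], one has Σ_{n=0}^∞ Q_n(x)·ψ^{n+1} = σ·Σ_{m=0}^∞ (x-1)^m σ^m/m!; the family on the left is summable because ψ^{n+1} has order n+1. -/

import Mathlib

open Polynomial

noncomputable section SQP

/-- shift by one, as a ring hom -/
def SQP.tau : ℂ[X] →+* ℂ[X] := Polynomial.compRingHom (X + 1)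

lemma SQP.tau_apply (p : ℂ[X]) : SQP.tau p = p.comp (X + 1) := rfl

lemma SQP.tau_C (a : ℂ) : SQP.tau (C a) = C a := by
  simp [SQP.tau_apply]

lemma SQP.eval_tau (p : ℂ[X]) (z : ℂ) : (SQP.tau p).eval z = p.eval (z + 1) := by
  simp [SQP.tau_apply, eval_comp]

/-- antiderivative vanishing at 0 -/
def SQP.intP (p : ℂ[X]) : ℂ[X] := p.sum fun k a => C (a / (k + 1)) * X ^ (k + 1)

lemma SQP.intP_add (p q : ℂ[X]) : SQP.intP (p + q) = SQP.intP p + SQP.intP q := by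
  unfold SQP.intP
  apply Polynomial.sum_add_index
  · intro i; simp
  · intro i a b; rw [add_div, map_add, add_mul]

lemma SQP.intP_zero : SQP.intP 0 = 0 := by simp [SQP.intP]

lemma SQP.intP_monomial (m : ℕ) (a : ℂ) :
    SQP.intP (monomial m a) = monomial (m + 1) (a / (m + 1)) := by
  rw [SQP.intP, Polynomial.sum_monomial_index _ _ (by simp), C_mul_X_pow_eq_monomial]

lemma SQP.intP_C_mul (a : ℂ) (p : ℂ[X]) : SQP.intP (C a * p) = C a * SQP.intP p := by
  rw [← smul_eq_C_mul, SQP.intP, Polynomial.sum_smul_index _ _ _ (fun i => by simp)]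
  rw [SQP.intP, Polynomial.sum_def, Polynomial.sum_def, Finset.mul_sum]
  refine Finset.sum_congr rfl fun k _ => ?_
  rw [mul_div_assoc, C_mul, mul_assoc]

lemma SQP.derivative_intP (p : ℂ[X]) : derivative (SQP.intP p) = p := by
  conv_rhs => rw [← Polynomial.sum_C_mul_X_pow_eq p]
  unfold SQP.intP
  rw [Polynomial.sum_def, Polynomial.sum_def, map_sum]
  refine Finset.sum_congr rfl fun k _ => ?_
  rw [derivative_C_mul, derivative_X_pow, ← mul_assoc, ← C_mul, Nat.add_sub_cancel]
  congr 2
  push_cast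
  exact div_mul_cancel₀ (p.coeff k) (Nat.cast_add_one_ne_zero k (R := ℂ))

lemma SQP.eval_zero_intP (p : ℂ[X]) : (SQP.intP p).eval 0 = 0 := by
  unfold SQP.intP
  rw [Polynomial.sum_def, eval_finset_sum]
  refine Finset.sum_eq_zero fun k _ => ?_
  simp

/-- the integration operator appearing in the recursion -/
def SQP.J (p : ℂ[X]) : ℂ[X] := SQP.intP (SQP.tau p)

lemma SQP.integral_eval (p : ℂ[X]) (x : ℝ) :
    (∫ y in (0:ℝ)..x, p.eval ((y : ℂ) + 1)) = (SQP.J p).eval (x : ℂ) := by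
  have h1 : ∀ y : ℝ, HasDerivAt (fun t : ℝ => (SQP.J p).eval (t : ℂ))
      (p.eval ((y : ℂ) + 1)) y := by
    intro y
    have h := (Polynomial.hasDerivAt (SQP.J p) ((y : ℝ) : ℂ)).comp_ofReal
    have hd : (SQP.J p).derivative.eval ((y : ℝ) : ℂ) = p.eval ((y : ℂ) + 1) := by
      rw [SQP.J, SQP.derivative_intP, SQP.eval_tau]
    rwa [hd] at h
  have hc : Continuous fun y : ℝ => p.eval ((y : ℂ) + 1) :=
    p.continuous.comp (Complex.continuous_ofReal.add continuous_const)
  rw [intervalIntegral.integral_eq_sub_of_hasDerivAt (fun t _ => h1 t)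
    (hc.intervalIntegrable _ _)]
  have : (SQP.J p).eval (((0:ℝ) : ℂ)) = 0 := by
    simpa [SQP.J] using SQP.eval_zero_intP (SQP.tau p)
  rw [this, sub_zero]

/-- combined recursion operator -/
def SQP.K (c : ℂ) (p : ℂ[X]) : ℂ[X] := C c * SQP.tau p + SQP.J p

lemma SQP.K_add (c : ℂ) (p q : ℂ[X]) : SQP.K c (p + q) = SQP.K c p + SQP.K c q := by
  simp only [SQP.K, SQP.J, map_add, SQP.intP_add]; ring

lemma SQP.K_zero (c : ℂ) : SQP.K c 0 = 0 := by
  simp [SQP.K, SQP.J, SQP.intP_zero]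

lemma SQP.K_mul_C (c : ℂ) (p : ℂ[X]) (a : ℂ) :
    SQP.K c (p * C a) = SQP.K c p * C a := by
  have ht : SQP.tau (p * C a) = SQP.tau p * C a := by
    rw [map_mul, SQP.tau_C]
  have hj : SQP.J (p * C a) = SQP.J p * C a := by
    rw [SQP.J, ht, mul_comm _ (C a), SQP.intP_C_mul, mul_comm, SQP.J]
  rw [SQP.K, ht, hj, SQP.K]; ring

lemma SQP.K_pow (c : ℂ) (m : ℕ) (a : ℂ) :
    SQP.K c ((X - 1 : ℂ[X]) ^ m * C a) =
      C c * (X ^ m * C a) + monomial (m + 1) (a / (m + 1)) := by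
  have ht : SQP.tau ((X - 1 : ℂ[X]) ^ m * C a) = X ^ m * C a := by
    rw [map_mul, map_pow, map_sub, SQP.tau_C, map_one, SQP.tau_apply, X_comp]
    simp
  rw [SQP.K, ht]
  congr 1
  rw [SQP.J, ht, mul_comm (X ^ m) (C a), SQP.intP_C_mul, X_pow_eq_monomial,
    SQP.intP_monomial, C_mul_monomial, mul_one_div]

namespace SQP

def EE (a : ℂ[X]) : PowerSeries ℂ[X] := PowerSeries.rescale a (PowerSeries.exp ℂ[X])

lemma coeff_EE (a : ℂ[X]) (n : ℕ) :
    PowerSeries.coeff n (EE a) = a ^ n * Polynomial.C ((n.factorial : ℂ))⁻¹ := by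
  rw [EE, PowerSeries.coeff_rescale, PowerSeries.coeff_exp]
  congr 1
  rw [Polynomial.algebraMap_apply]
  congr 1
  rw [eq_ratCast (algebraMap ℚ ℂ) (1 / (n.factorial : ℚ))]
  push_cast
  rw [one_div]

lemma EE_mul_EE (a b : ℂ[X]) : EE a * EE b = EE (a + b) :=
  PowerSeries.exp_mul_exp_eq_exp_add a b

end SQP
end SQP
noncomputable section SQPC
namespace SQP
open Polynomial

def Psi (ψ : PowerSeries ℂ) : PowerSeries ℂ[X] :=
  PowerSeries.map (Polynomial.C : ℂ →+* ℂ[X]) ψ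

def Wop (c : ℂ) (G : PowerSeries ℂ[X]) : PowerSeries ℂ[X] :=
  1 + PowerSeries.mk fun m => SQP.K c (PowerSeries.coeff m G)

def Fser : PowerSeries ℂ[X] := PowerSeries.X * EE (Polynomial.X - 1)

def Lser (Q : ℕ → ℂ[X]) (ψ : PowerSeries ℂ) : PowerSeries ℂ[X] :=
  PowerSeries.mk fun m => ∑ n ∈ Finset.range (m + 1),
    PowerSeries.coeff m (PowerSeries.C (Q n) * (Psi ψ) ^ (n + 1))

lemma coeff_C_mul_Psi_pow (p : ℂ[X]) (ψ : PowerSeries ℂ) (j n : ℕ) :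
    PowerSeries.coeff j (PowerSeries.C p * (Psi ψ) ^ n) =
      p * Polynomial.C (PowerSeries.coeff j (ψ ^ n)) := by
  rw [PowerSeries.coeff_C_mul, Psi, ← map_pow, PowerSeries.coeff_map]

lemma vanish {ψ : PowerSeries ℂ} (hψ0 : PowerSeries.constantCoeff (R := ℂ) ψ = 0)
    (p : ℂ[X]) {n j : ℕ} (hj : j ≤ n) :
    PowerSeries.coeff j (PowerSeries.C p * (Psi ψ) ^ (n + 1)) = 0 := by
  rw [coeff_C_mul_Psi_pow]
  have h : PowerSeries.coeff (R := ℂ) j (ψ ^ (n + 1)) = 0 :=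
    PowerSeries.X_pow_dvd_iff.mp
      (pow_dvd_pow_of_dvd (PowerSeries.X_dvd_iff.mpr hψ0) (n + 1)) j (by omega)
  rw [h, map_zero, mul_zero]

lemma coeff_zero_Psi {ψ : PowerSeries ℂ} (hψ0 : PowerSeries.constantCoeff (R := ℂ) ψ = 0) :
    PowerSeries.coeff 0 (Psi ψ) = 0 := by
  rw [Psi, PowerSeries.coeff_map, PowerSeries.coeff_zero_eq_constantCoeff_apply, hψ0, map_zero]

lemma claimC (c : ℂ) {ψ : PowerSeries ℂ} (hψ0 : PowerSeries.constantCoeff (R := ℂ) ψ = 0)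
    (G H : PowerSeries ℂ[X]) (hG : G = Psi ψ * Wop c G) (hH : H = Psi ψ * Wop c H) :
    G = H := by
  refine PowerSeries.ext fun m => ?_
  induction m using Nat.strong_induction_on with
  | _ m ih =>
    conv_lhs => rw [hG]
    conv_rhs => rw [hH]
    rw [PowerSeries.coeff_mul, PowerSeries.coeff_mul]
    refine Finset.sum_congr rfl fun p hp => ?_
    rcases Nat.eq_zero_or_pos p.1 with h1 | h1
    · have h0 : PowerSeries.coeff p.1 (Psi ψ) = 0 := by rw [h1]; exact coeff_zero_Psi hψ0
      rw [h0, zero_mul, zero_mul]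
    · have hj : p.2 < m := by
        have := Finset.HasAntidiagonal.mem_antidiagonal.mp hp; omega
      congr 1
      simp only [Wop, map_add, PowerSeries.coeff_mk]
      rw [ih p.2 hj]

lemma claimB (c : ℂ) (ψ : PowerSeries ℂ)
    (h2 : ψ * (1 + PowerSeries.C (R := ℂ) c * PowerSeries.X) =
      PowerSeries.X * PowerSeries.mk (fun m => (-1) ^ m / (m.factorial : ℂ))) :
    Fser = Psi ψ * Wop c Fser := by
  have hEneg : PowerSeries.map (Polynomial.C : ℂ →+* ℂ[X])
      (PowerSeries.mk fun m => (-1) ^ m / (m.factorial : ℂ)) = EE (-1) := by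
    refine PowerSeries.ext fun k => ?_
    rw [PowerSeries.coeff_map, PowerSeries.coeff_mk, coeff_EE, div_eq_mul_inv,
      map_mul, map_pow, map_neg, map_one]
  have hmap : Psi ψ * (1 + PowerSeries.C (Polynomial.C c) * PowerSeries.X) =
      PowerSeries.X * EE (-1) := by
    have h3 := congrArg (PowerSeries.map (Polynomial.C : ℂ →+* ℂ[X])) h2
    simp only [map_mul, map_add, map_one, PowerSeries.map_X, PowerSeries.map_C] at h3
    rw [Psi, h3, hEneg]
  have hWF : Wop c Fser =
      EE Polynomial.X * (1 + PowerSeries.C (Polynomial.C c) * PowerSeries.X) := by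
    have hexp : EE Polynomial.X * (1 + PowerSeries.C (Polynomial.C c) * PowerSeries.X)
        = EE Polynomial.X +
          PowerSeries.C (Polynomial.C c) * (PowerSeries.X * EE Polynomial.X) := by
      ring
    rw [hexp]
    refine PowerSeries.ext fun m => ?_
    cases m with
    | zero =>
      rw [Wop, map_add, PowerSeries.coeff_mk]
      have hF0 : PowerSeries.coeff 0 Fser = 0 := by
        rw [Fser, PowerSeries.coeff_zero_eq_constantCoeff_apply, map_mul,
          PowerSeries.constantCoeff_X, zero_mul]
      rw [hF0, K_zero, add_zero, map_add, PowerSeries.coeff_C_mul]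
      have hX0 : PowerSeries.coeff 0 (PowerSeries.X * EE Polynomial.X) = 0 := by
        rw [PowerSeries.coeff_zero_eq_constantCoeff_apply, map_mul,
          PowerSeries.constantCoeff_X, zero_mul]
      rw [hX0, mul_zero, add_zero, PowerSeries.coeff_one, if_pos rfl,
        PowerSeries.coeff_zero_eq_constantCoeff_apply, EE,
        ← PowerSeries.coeff_zero_eq_constantCoeff_apply, PowerSeries.coeff_rescale,
        PowerSeries.coeff_exp]
      simp
    | succ k =>
      rw [Wop, map_add, PowerSeries.coeff_mk, PowerSeries.coeff_one, if_neg k.succ_ne_zero,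
        zero_add]
      rw [Fser, PowerSeries.coeff_succ_X_mul, coeff_EE, K_pow]
      rw [map_add, PowerSeries.coeff_C_mul, PowerSeries.coeff_succ_X_mul, coeff_EE, coeff_EE]
      have hfact : (((k.factorial : ℂ))⁻¹ / ((k : ℂ) + 1)) = (((k+1).factorial : ℂ))⁻¹ := by
        rw [Nat.factorial_succ]
        push_cast
        rw [mul_inv, div_eq_mul_inv, mul_comm]
      rw [← C_mul_X_pow_eq_monomial, hfact]
      ring
  rw [hWF, show Psi ψ * (EE Polynomial.X *
        (1 + PowerSeries.C (Polynomial.C c) * PowerSeries.X)) =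
      Psi ψ * (1 + PowerSeries.C (Polynomial.C c) * PowerSeries.X) * EE Polynomial.X
      from by ring, hmap, mul_assoc, EE_mul_EE, neg_add_eq_sub, Fser]

lemma claimA (c : ℂ) (ψ : PowerSeries ℂ) (Q : ℕ → ℂ[X])
    (hψ0 : PowerSeries.constantCoeff (R := ℂ) ψ = 0) (hQ0 : Q 0 = 1)
    (hrec : ∀ n, Q (n + 1) = SQP.K c (Q n)) :
    Lser Q ψ = Psi ψ * Wop c (Lser Q ψ) := by
  refine PowerSeries.ext fun m => ?_
  have hWL : ∀ j, PowerSeries.coeff j (Wop c (Lser Q ψ)) =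
      PowerSeries.coeff (R := ℂ[X]) j 1 + ∑ n ∈ Finset.range (j + 1),
        PowerSeries.coeff j (PowerSeries.C (Q (n + 1)) * (Psi ψ) ^ (n + 1)) := by
    intro j
    rw [Wop, map_add, PowerSeries.coeff_mk, Lser, PowerSeries.coeff_mk]
    congr 1
    rw [← AddMonoidHom.mk'_apply (SQP.K c) (SQP.K_add c), map_sum]
    refine Finset.sum_congr rfl fun n _ => ?_
    rw [AddMonoidHom.mk'_apply, coeff_C_mul_Psi_pow, K_mul_C, ← hrec n,
      ← coeff_C_mul_Psi_pow]
  rw [PowerSeries.coeff_mul]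
  have step1 : ∀ p : ℕ × ℕ, p ∈ Finset.HasAntidiagonal.antidiagonal m →
      PowerSeries.coeff p.1 (Psi ψ) * PowerSeries.coeff p.2 (Wop c (Lser Q ψ)) =
      PowerSeries.coeff p.1 (Psi ψ) * PowerSeries.coeff (R := ℂ[X]) p.2 1 +
      PowerSeries.coeff p.1 (Psi ψ) * ∑ n ∈ Finset.range (m + 1),
        PowerSeries.coeff p.2 (PowerSeries.C (Q (n + 1)) * (Psi ψ) ^ (n + 1)) := by
    intro p hp
    have hp2 : p.2 ≤ m := by have := Finset.HasAntidiagonal.mem_antidiagonal.mp hp; omega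
    rw [hWL p.2, mul_add]
    congr 2
    apply Finset.sum_subset (Finset.range_subset_range.mpr (by omega))
    intro n _ hn
    have hn2 : p.2 ≤ n := by
      simp only [Finset.mem_range, not_lt] at hn; omega
    exact vanish hψ0 _ hn2
  rw [Finset.sum_congr rfl step1, Finset.sum_add_distrib]
  have first : (∑ p ∈ Finset.HasAntidiagonal.antidiagonal m,
      PowerSeries.coeff p.1 (Psi ψ) * PowerSeries.coeff (R := ℂ[X]) p.2 1) =
      PowerSeries.coeff m (Psi ψ) := by
    rw [← PowerSeries.coeff_mul, mul_one]
  have second : (∑ p ∈ Finset.HasAntidiagonal.antidiagonal m,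
      PowerSeries.coeff p.1 (Psi ψ) * ∑ n ∈ Finset.range (m + 1),
        PowerSeries.coeff p.2 (PowerSeries.C (Q (n + 1)) * (Psi ψ) ^ (n + 1))) =
      ∑ n ∈ Finset.range m,
        PowerSeries.coeff m (PowerSeries.C (Q (n + 1)) * (Psi ψ) ^ (n + 2)) := by
    rw [Finset.sum_congr rfl fun (p : ℕ × ℕ) (_ : p ∈ Finset.HasAntidiagonal.antidiagonal m) =>
      (Finset.mul_sum (Finset.range (m + 1)) _ (PowerSeries.coeff (R := ℂ[X]) p.1 (Psi ψ)) :
        PowerSeries.coeff (R := ℂ[X]) p.1 (Psi ψ) * _ = _), Finset.sum_comm]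
    have inner : ∀ n, (∑ p ∈ Finset.HasAntidiagonal.antidiagonal m,
        PowerSeries.coeff p.1 (Psi ψ) *
          PowerSeries.coeff p.2 (PowerSeries.C (Q (n + 1)) * (Psi ψ) ^ (n + 1))) =
        PowerSeries.coeff m (PowerSeries.C (Q (n + 1)) * (Psi ψ) ^ (n + 2)) := by
      intro n
      rw [← PowerSeries.coeff_mul]
      refine congrArg _ ?_
      ring
    rw [Finset.sum_congr rfl fun n _ => inner n, Finset.sum_range_succ]
    have hv : PowerSeries.coeff m (PowerSeries.C (Q (m + 1)) * (Psi ψ) ^ (m + 2)) = 0 :=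
      vanish hψ0 (Q (m + 1)) (n := m + 1) (j := m) (by omega)
    rw [hv, add_zero]
  rw [first, second, Lser, PowerSeries.coeff_mk, Finset.sum_range_succ']
  rw [hQ0, map_one, one_mul, pow_one]
  have : ∀ n, (PowerSeries.C (Q (n + 1)) * (Psi ψ) ^ (n + 1 + 1)) =
      (PowerSeries.C (Q (n + 1)) * (Psi ψ) ^ (n + 2)) := fun n => rfl
  rw [add_comm]

end SQP
end SQPC
namespace SQP
open Polynomial

lemma Q_rec (c : ℂ) (Q : ℕ → ℂ[X])
    (hQrec : ∀ (n : ℕ) (x : ℝ),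
      (Q (n + 1)).eval (x : ℂ) =
        c * (Q n).eval ((x : ℂ) + 1) + ∫ y in (0:ℝ)..x, (Q n).eval ((y : ℂ) + 1))
    (n : ℕ) : Q (n + 1) = SQP.K c (Q n) := by
  have key : ∀ x : ℝ, (Q (n + 1) - SQP.K c (Q n)).eval ((x : ℝ) : ℂ) = 0 := by
    intro x
    rw [eval_sub, hQrec n x, SQP.K, eval_add, eval_mul, eval_C, SQP.eval_tau,
      SQP.integral_eval]
    ring
  have h0 : Q (n + 1) - SQP.K c (Q n) = 0 := by
    apply Polynomial.eq_zero_of_infinite_isRoot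
    apply Set.Infinite.mono (s := Set.range ((↑) : ℝ → ℂ))
    · rintro _ ⟨x, rfl⟩
      exact key x
    · exact Set.infinite_range_of_injective Complex.ofReal_injective
  exact sub_eq_zero.mp h0

end SQP

/-- Let `c ∈ ℂ` and `ψ = σ·e^{-σ}·(1+cσ)⁻¹`, a formal power series of order `1` over `ℂ`.
Let `(Q n)ₙ` be the polynomials with `Q 0 = 1` and
`Q (n+1) (x) = c·Q n (x+1) + ∫₀ˣ Q n (y+1) dy`.  Then in `(ℂ[x])⟦σ⟧` one has
`Σ_{n=0}^∞ Q n (x)·ψ^{n+1} = σ·Σ_{m=0}^∞ (x-1)^m σ^m/m!`; the family on the left is summable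
(coefficient-wise the sum is finite) because `ψ^{n+1}` has order `n+1`. -/
theorem sum_Q_psi_eq (c : ℂ) (Q : ℕ → Polynomial ℂ)
    (hQ0 : Q 0 = 1)
    (hQrec : ∀ (n : ℕ) (x : ℝ),
      (Q (n + 1)).eval (x : ℂ) =
        c * (Q n).eval ((x : ℂ) + 1) + ∫ y in (0:ℝ)..x, (Q n).eval ((y : ℂ) + 1))
    (ψ : PowerSeries ℂ)
    (hψ : ψ = PowerSeries.X * PowerSeries.mk (fun m => (-1) ^ m / (m.factorial : ℂ)) *
        (1 + PowerSeries.C (R := ℂ) c * PowerSeries.X)⁻¹) :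
    (∀ n : ℕ, (ψ ^ (n + 1)).order = ((n + 1 : ℕ) : ℕ∞)) ∧
    ∀ m : ℕ,
      (∑ n ∈ Finset.range (m + 1),
        (PowerSeries.coeff (R := Polynomial ℂ) m)
          (PowerSeries.C (R := Polynomial ℂ) (Q n) *
            (PowerSeries.map (Polynomial.C : ℂ →+* Polynomial ℂ) ψ) ^ (n + 1))) =
      (PowerSeries.coeff (R := Polynomial ℂ) m)
        (PowerSeries.X *
          PowerSeries.mk (fun m =>
            (Polynomial.X - 1 : Polynomial ℂ) ^ m * Polynomial.C ((m.factorial : ℂ))⁻¹)) := by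
  have hinvc : PowerSeries.constantCoeff (R := ℂ) (1 + PowerSeries.C (R := ℂ) c * PowerSeries.X) ≠ 0 := by
    simp
  -- key multiplicative identity
  have h2 : ψ * (1 + PowerSeries.C (R := ℂ) c * PowerSeries.X) =
      PowerSeries.X * PowerSeries.mk (fun m => (-1) ^ m / (m.factorial : ℂ)) := by
    rw [hψ, mul_assoc, PowerSeries.inv_mul_cancel _ hinvc, mul_one]
  have hψ0 : PowerSeries.constantCoeff (R := ℂ) ψ = 0 := by
    rw [hψ]
    simp [mul_assoc]
  -- Part 1 : orders
  have horder : ∀ n : ℕ, (ψ ^ (n + 1)).order = ((n + 1 : ℕ) : ℕ∞) := by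
    intro n
    set u : PowerSeries ℂ := PowerSeries.mk (fun m => (-1) ^ m / (m.factorial : ℂ)) *
        (1 + PowerSeries.C (R := ℂ) c * PowerSeries.X)⁻¹ with hu
    have hsplit : ψ ^ (n + 1) = PowerSeries.X ^ (n + 1) * u ^ (n + 1) := by
      rw [hψ, hu]; ring
    have hu0 : PowerSeries.constantCoeff (R := ℂ) (u ^ (n + 1)) ≠ 0 := by
      rw [map_pow]
      apply pow_ne_zero
      rw [hu, map_mul, PowerSeries.constantCoeff_inv]
      simp [PowerSeries.constantCoeff_mk]
    have huord : (u ^ (n + 1)).order = ((0 : ℕ) : ℕ∞) :=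
      PowerSeries.order_eq_nat.mpr
        ⟨by rwa [PowerSeries.coeff_zero_eq_constantCoeff_apply],
          fun i hi => absurd hi (Nat.not_lt_zero i)⟩
    rw [hsplit, PowerSeries.order_mul, PowerSeries.order_X_pow, huord, Nat.cast_zero,
      add_zero]
  refine ⟨horder, fun m => ?_⟩
  -- Part 2
  have hrec : ∀ n, Q (n + 1) = SQP.K c (Q n) := SQP.Q_rec c Q hQrec
  have hL := SQP.claimA c ψ Q hψ0 hQ0 hrec
  have hF := SQP.claimB c ψ h2
  have hLF : SQP.Lser Q ψ = SQP.Fser := SQP.claimC c hψ0 _ _ hL hF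
  have hcoeffL := congrArg (PowerSeries.coeff (R := Polynomial ℂ) m) hLF
  rw [SQP.Lser, PowerSeries.coeff_mk] at hcoeffL
  rw [show (SQP.Psi ψ) = PowerSeries.map (Polynomial.C : ℂ →+* Polynomial ℂ) ψ from rfl]
    at hcoeffL
  have hEEmk : SQP.EE (Polynomial.X - 1) = PowerSeries.mk (fun m =>
      (Polynomial.X - 1 : Polynomial ℂ) ^ m * Polynomial.C ((m.factorial : ℂ))⁻¹) := by
    refine PowerSeries.ext fun k => ?_
    rw [SQP.coeff_EE, PowerSeries.coeff_mk]
  rw [hcoeffL, SQP.Fser, hEEmk]
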